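/- arXiv:2304.14980 — 3 statements merged into one kernel-verified Lean document; each statement's English description precedes it below -/
import Mathlib

section
/- Let x, y be candidates in an election with n ≥ 2 candidates. If x ≥_α y for some α with 1 − 1/n < α ≤ 1, then x is ranked before y in every Kemeny ranking of the election. -/
open Finset

/-- A ranking (strict total order) of the finite candidate set `C`, encoded as a
bijection with `Fin (Fintype.card C)`; position `0` is the top of the ranking. -/
abbrev Ranking (C : Type*) [Fintype C] := C ≃ Fin (Fintype.card C)

section Defs

variable {C : Type*} [Fintype C] [DecidableEq C]

/-- `x` is ranked (strictly) before `y` in the ranking `π`. -/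
def Before (π : Ranking C) (x y : C) : Prop := π x < π y

instance (π : Ranking C) (x y : C) : Decidable (Before π x y) :=
  inferInstanceAs (Decidable (π x < π y))

instance : DecidableEq (Ranking C) := fun a b =>
  decidable_of_iff (∀ i, a i = b i) Equiv.ext_iff.symm

/-- The top-ranked element of `S ⊆ C` according to `π` (`⊤` if `S = ∅`). -/
def topS (π : Ranking C) (S : Finset C) : WithTop C :=
  (S.image π).min.map (fun i => π.symm i)

/-- The `k`-wise Kendall-tau distance between two rankings: the number of subsets
`S ⊆ C` with `|S| ≤ k` on whose top element the two rankings disagree (subsets of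
size at most one never contribute). -/
def kDist (k : ℕ) (π σ : Ranking C) : ℕ :=
  ((Finset.univ : Finset C).powerset.filter
    (fun S => S.card ≤ k ∧ topS π S ≠ topS σ S)).card

/-- The `k`-wise Kendall-tau distance from a ranking to a voting profile. -/
def kDistV (k : ℕ) (π : Ranking C) (V : Multiset (Ranking C)) : ℕ :=
  (V.map (fun σ => kDist k π σ)).sum

/-- `π` is a `k`-wise median (for `k = 2`: a Kemeny ranking) of the profile `V`. -/
def IsKMedian (k : ℕ) (V : Multiset (Ranking C)) (π : Ranking C) : Prop :=
  ∀ σ : Ranking C, kDistV k π V ≤ kDistV k σ V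

/-- The number of votes of `V` in which `x` is ranked before `y`. -/
def votesBefore (V : Multiset (Ranking C)) (x y : C) : ℕ :=
  Multiset.card (V.filter (fun v => Before v x y))

/-- `x ≥ₛ y` : `x` is ranked before `y` in at least `s·|V|` of the votes. -/
def AtLeastRatio (V : Multiset (Ranking C)) (s : ℝ) (x y : C) : Prop :=
  s * (Multiset.card V : ℝ) ≤ (votesBefore V x y : ℝ)

/-- `x >ₛ y` : `x` is ranked before `y` in more than `s·|V|` of the votes. -/
def MoreThanRatio (V : Multiset (Ranking C)) (s : ℝ) (x y : C) : Prop :=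
  s * (Multiset.card V : ℝ) < (votesBefore V x y : ℝ)

noncomputable instance (V : Multiset (Ranking C)) (s : ℝ) (x y : C) :
    Decidable (AtLeastRatio V s x y) :=
  inferInstanceAs (Decidable (s * (Multiset.card V : ℝ) ≤ (votesBefore V x y : ℝ)))

/-- `x` is a non-dirty candidate w.r.t. threshold `s`. -/
def NonDirty (V : Multiset (Ranking C)) (s : ℝ) (x : C) : Prop :=
  ∀ y : C, y ≠ x → AtLeastRatio V s x y ∨ AtLeastRatio V s y x

/-- `x` is ranked first (is the winner) in the ranking `π`. -/
def RankedFirst (π : Ranking C) (x : C) : Prop :=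
  ∀ y : C, y ≠ x → Before π x y

instance (π : Ranking C) (x : C) : Decidable (RankedFirst π x) :=
  inferInstanceAs (Decidable (∀ y : C, y ≠ x → Before π x y))

end Defs


set_option linter.unusedSectionVars false

section Helpers

variable {C : Type*} [Fintype C] [DecidableEq C]

lemma topS_empty (π : Ranking C) : topS π (∅ : Finset C) = ⊤ := by
  simp [topS]

lemma topS_singleton (π : Ranking C) (a : C) : topS π {a} = (a : WithTop C) := by
  simp [topS, Finset.min_singleton]

lemma topS_pair (π : Ranking C) {a b : C} (h : a ≠ b) :
    topS π {a, b} = if π a < π b then (a : WithTop C) else b := by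
  have himg : ({a, b} : Finset C).image π = {π a, π b} := by simp
  rw [topS, himg, Finset.min_eq_inf_withTop, Finset.inf_insert, Finset.inf_singleton,
    ← WithTop.coe_inf]
  by_cases hlt : π a < π b
  · rw [if_pos hlt, min_eq_left hlt.le]; simp
  · rw [if_neg hlt, min_eq_right (le_of_not_gt hlt)]; simp

lemma kDist_two (ρ σ : Ranking C) :
    kDist 2 ρ σ = ((univ ×ˢ univ).filter
      (fun ab : C × C => ρ ab.1 < ρ ab.2 ∧ σ ab.2 < σ ab.1)).card := by
  have himg : (Finset.univ.powerset.filter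
      (fun S : Finset C => S.card ≤ 2 ∧ topS ρ S ≠ topS σ S)) =
      ((univ ×ˢ univ).filter (fun ab : C × C => ρ ab.1 < ρ ab.2 ∧ σ ab.2 < σ ab.1)).image
        (fun ab => ({ab.1, ab.2} : Finset C)) := by
    ext S
    simp only [Finset.mem_filter, Finset.mem_powerset, Finset.subset_univ, true_and,
      Finset.mem_image, Finset.mem_product, Finset.mem_univ, and_true, Prod.exists]
    constructor
    · rintro ⟨hcard, hne⟩
      have hc2 : S.card = 2 := by
        rcases Nat.lt_or_ge S.card 2 with h2 | h2
        · exfalso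
          interval_cases hc : S.card
          · rw [Finset.card_eq_zero.mp hc] at hne
            exact hne rfl
          · obtain ⟨a, rfl⟩ := Finset.card_eq_one.mp hc
            rw [topS_singleton, topS_singleton] at hne
            exact hne rfl
        · omega
      obtain ⟨a, b, hab, rfl⟩ := Finset.card_eq_two.mp hc2
      have hρ : ρ a ≠ ρ b := fun hh => hab (ρ.injective hh)
      have hσ : σ a ≠ σ b := fun hh => hab (σ.injective hh)
      rcases hρ.lt_or_gt with hl | hl
      · refine ⟨a, b, ⟨hl, ?_⟩, rfl⟩
        rw [topS_pair ρ hab, topS_pair σ hab, if_pos hl] at hne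
        by_cases hσ' : σ a < σ b
        · rw [if_pos hσ'] at hne; exact absurd rfl hne
        · exact lt_of_le_of_ne (le_of_not_gt hσ') hσ.symm
      · refine ⟨b, a, ⟨hl, ?_⟩, (Finset.pair_comm a b).symm⟩
        rw [topS_pair ρ hab, topS_pair σ hab, if_neg (asymm hl)] at hne
        by_cases hσ' : σ b < σ a
        · rw [if_neg (asymm hσ')] at hne; exact absurd rfl hne
        · exact lt_of_le_of_ne (le_of_not_gt hσ') hσ
    · rintro ⟨a, b, ⟨h1, h2⟩, rfl⟩
      have hab : a ≠ b := fun hh => lt_irrefl _ (hh ▸ h1)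
      refine ⟨by rw [Finset.card_pair hab], ?_⟩
      rw [topS_pair ρ hab, topS_pair σ hab, if_pos h1, if_neg (asymm h2)]
      simp [hab]
  rw [kDist, himg, Finset.card_image_of_injOn]
  rintro ⟨a, b⟩ hab ⟨c, d⟩ hcd heq
  simp only [Finset.mem_coe, Finset.mem_filter, Finset.mem_product] at hab hcd
  simp only at heq
  have hab' : a ≠ b := fun hh => lt_irrefl _ (hh ▸ hab.2.1)
  have hcd' : c ≠ d := fun hh => lt_irrefl _ (hh ▸ hcd.2.1)
  have ha : a = c ∨ a = d := by
    have : a ∈ ({c, d} : Finset C) := heq ▸ Finset.mem_insert_self a {b}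
    simpa using this
  have hb : b = c ∨ b = d := by
    have : b ∈ ({c, d} : Finset C) := heq ▸ Finset.mem_insert_of_mem (Finset.mem_singleton_self b)
    simpa using this
  rcases ha with rfl | rfl
  · rcases hb with rfl | rfl
    · exact absurd rfl hab'
    · rfl
  · rcases hb with rfl | rfl
    · exact absurd (hab.2.1.trans hcd.2.1) (lt_irrefl _)
    · exact absurd rfl hab'

lemma multiset_sum_map_sum {α β : Type*} (V : Multiset α) (F : Finset β) (f : α → β → ℕ) :
    (V.map (fun σ => ∑ p ∈ F, f σ p)).sum = ∑ p ∈ F, (V.map (fun σ => f σ p)).sum := by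
  induction V using Multiset.induction with
  | empty => simp
  | cons a s ih => simp [ih, Finset.sum_add_distrib]

lemma multiset_card_filter {α : Type*} (V : Multiset α) (p : α → Prop) [DecidablePred p] :
    Multiset.card (V.filter p) = (V.map (fun v => if p v then 1 else 0)).sum := by
  induction V using Multiset.induction with
  | empty => simp
  | cons a s ih => by_cases h : p a <;> simp [Multiset.filter_cons, h, ih] <;> omega

lemma kDistV_eq (ρ : Ranking C) (V : Multiset (Ranking C)) :
    kDistV 2 ρ V = ∑ a : C, ∑ b : C, (if Before ρ a b then votesBefore V b a else 0) := by
  rw [kDistV]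
  have h1 : ∀ σ : Ranking C, kDist 2 ρ σ =
      ∑ ab ∈ ((univ : Finset C) ×ˢ univ),
        (if ρ ab.1 < ρ ab.2 ∧ σ ab.2 < σ ab.1 then 1 else 0) := by
    intro σ; rw [kDist_two, Finset.card_filter]
  calc (V.map (fun σ => kDist 2 ρ σ)).sum
      = ∑ ab ∈ ((univ : Finset C) ×ˢ univ),
          (V.map (fun σ => if ρ ab.1 < ρ ab.2 ∧ σ ab.2 < σ ab.1 then 1 else 0)).sum := by
        rw [← multiset_sum_map_sum]
        congr 1
        exact Multiset.map_congr rfl (fun σ _ => h1 σ)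
    _ = ∑ a : C, ∑ b : C, (if Before ρ a b then votesBefore V b a else 0) := by
        rw [Finset.sum_product]
        refine Finset.sum_congr rfl (fun a _ => Finset.sum_congr rfl (fun b _ => ?_))
        show (V.map (fun σ => if ρ a < ρ b ∧ σ b < σ a then 1 else 0)).sum = _
        by_cases hab : ρ a < ρ b
        · rw [if_pos (show Before ρ a b from hab), votesBefore, multiset_card_filter]
          congr 1
          exact Multiset.map_congr rfl (fun σ _ => by simp [hab, Before]; exact if_congr Iff.rfl rfl rfl)
        · rw [if_neg (show ¬ Before ρ a b from hab)]
          have hz : (V.map (fun σ => if ρ a < ρ b ∧ σ b < σ a then 1 else 0)) =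
              V.map (fun _ => 0) := Multiset.map_congr rfl (fun σ _ => by simp [hab])
          rw [hz]
          simp

/-- The per-pair cost term. -/
def Fterm (V : Multiset (Ranking C)) (ρ : Ranking C) (a b : C) : ℤ :=
  if Before ρ a b then (votesBefore V b a : ℤ) else 0

lemma kDistV_eq_int (ρ : Ranking C) (V : Multiset (Ranking C)) :
    (kDistV 2 ρ V : ℤ) = ∑ a : C, ∑ b : C, Fterm V ρ a b := by
  rw [kDistV_eq]
  push_cast
  refine Finset.sum_congr rfl (fun a _ => Finset.sum_congr rfl (fun b _ => ?_))
  rw [Fterm]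

lemma median_diff (V : Multiset (Ranking C)) (π π' : Ranking C)
    (hmed : IsKMedian 2 V π) (w : C)
    (hagree : ∀ a b : C, a ≠ w → b ≠ w → (Before π' a b ↔ Before π a b)) :
    0 ≤ ∑ z ∈ univ.erase w,
      ((Fterm V π' w z + Fterm V π' z w) - (Fterm V π w z + Fterm V π z w)) := by
  have h0 : (kDistV 2 π V : ℤ) ≤ (kDistV 2 π' V : ℤ) := by exact_mod_cast hmed π'
  rw [kDistV_eq_int, kDistV_eq_int] at h0
  have hGzero : ∀ a b : C, a ≠ w → b ≠ w → Fterm V π' a b - Fterm V π a b = 0 := by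
    intro a b ha hb
    rw [Fterm, Fterm]
    by_cases hab : Before π a b
    · rw [if_pos hab, if_pos ((hagree a b ha hb).mpr hab), sub_self]
    · rw [if_neg hab, if_neg (fun hc => hab ((hagree a b ha hb).mp hc)), sub_self]
  have hGww : Fterm V π' w w - Fterm V π w w = 0 := by
    simp [Fterm, Before]
  have h1 : (0:ℤ) ≤ ∑ a : C, ∑ b : C, (Fterm V π' a b - Fterm V π a b) := by
    have heq : ∑ a : C, ∑ b : C, (Fterm V π' a b - Fterm V π a b)
        = (∑ a : C, ∑ b : C, Fterm V π' a b) - ∑ a : C, ∑ b : C, Fterm V π a b := by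
      rw [← Finset.sum_sub_distrib]
      exact Finset.sum_congr rfl (fun a _ => by rw [Finset.sum_sub_distrib])
    rw [heq]
    omega
  have h2 : ∑ a : C, ∑ b : C, (Fterm V π' a b - Fterm V π a b)
      = ∑ z ∈ univ.erase w,
          ((Fterm V π' w z + Fterm V π' z w) - (Fterm V π w z + Fterm V π z w)) := by
    rw [← Finset.add_sum_erase (univ : Finset C)
      (fun a => ∑ b : C, (Fterm V π' a b - Fterm V π a b)) (Finset.mem_univ w)]
    have hrow : ∀ a ∈ (univ : Finset C).erase w,
        (fun a => ∑ b : C, (Fterm V π' a b - Fterm V π a b)) a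
          = Fterm V π' a w - Fterm V π a w := by
      intro a ha
      exact Finset.sum_eq_single w (fun b _ hb => hGzero a b (Finset.mem_erase.mp ha).1 hb)
        (fun hw => absurd (Finset.mem_univ w) hw)
    have hcol : ∑ b : C, (Fterm V π' w b - Fterm V π w b)
        = ∑ z ∈ univ.erase w, (Fterm V π' w z - Fterm V π w z) := by
      rw [← Finset.add_sum_erase (univ : Finset C)
        (fun b => Fterm V π' w b - Fterm V π w b) (Finset.mem_univ w), hGww, zero_add]
    rw [Finset.sum_congr rfl hrow, hcol, ← Finset.sum_add_distrib]
    exact Finset.sum_congr rfl (fun z _ => by ring)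
  rw [h2] at h1
  exact h1

/-- The function on positions that moves position `q` to position `p < q`,
shifting everything in `[p, q)` up by one. -/
def moveFun (n p q : ℕ) (hq : q < n) (hpq : p < q) : Fin n → Fin n := fun i =>
  if _h1 : i.val < p ∨ q < i.val then i
  else if _h2 : i.val = q then ⟨p, lt_trans hpq hq⟩
  else ⟨i.val + 1, by omega⟩

lemma moveFun_val (n p q : ℕ) (hq : q < n) (hpq : p < q) (i : Fin n) :
    (moveFun n p q hq hpq i).val =
      if i.val < p ∨ q < i.val then i.val else if i.val = q then p else i.val + 1 := by
  unfold moveFun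
  split_ifs <;> rfl

lemma moveFun_inj (n p q : ℕ) (hq : q < n) (hpq : p < q) :
    Function.Injective (moveFun n p q hq hpq) := by
  intro i j hij
  have h := congrArg Fin.val hij
  rw [moveFun_val, moveFun_val] at h
  have hi := i.isLt
  have hj := j.isLt
  apply Fin.ext
  split_ifs at h <;> omega

/-- The move as a permutation of positions. -/
noncomputable def moveEquiv (n p q : ℕ) (hq : q < n) (hpq : p < q) : Fin n ≃ Fin n :=
  Equiv.ofBijective _ (Finite.injective_iff_bijective.mp (moveFun_inj n p q hq hpq))

lemma moveEquiv_val (n p q : ℕ) (hq : q < n) (hpq : p < q) (i : Fin n) :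
    ((moveEquiv n p q hq hpq) i).val =
      if i.val < p ∨ q < i.val then i.val else if i.val = q then p else i.val + 1 :=
  moveFun_val n p q hq hpq i

/-- The function on positions that moves position `p` to position `q > p`,
shifting everything in `(p, q]` down by one. -/
def moveFun' (n p q : ℕ) (hq : q < n) (hpq : p < q) : Fin n → Fin n := fun i =>
  if i.val < p ∨ q < i.val then i
  else if i.val = p then ⟨q, hq⟩
  else ⟨i.val - 1, Nat.lt_of_le_of_lt (Nat.sub_le _ _) i.isLt⟩

lemma moveFun'_val (n p q : ℕ) (hq : q < n) (hpq : p < q) (i : Fin n) :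
    (moveFun' n p q hq hpq i).val =
      if i.val < p ∨ q < i.val then i.val else if i.val = p then q else i.val - 1 := by
  unfold moveFun'
  split_ifs <;> rfl

lemma moveFun'_inj (n p q : ℕ) (hq : q < n) (hpq : p < q) :
    Function.Injective (moveFun' n p q hq hpq) := by
  intro i j hij
  have h := congrArg Fin.val hij
  rw [moveFun'_val, moveFun'_val] at h
  have hi := i.isLt
  have hj := j.isLt
  apply Fin.ext
  split_ifs at h <;> omega

noncomputable def moveEquiv' (n p q : ℕ) (hq : q < n) (hpq : p < q) : Fin n ≃ Fin n :=
  Equiv.ofBijective _ (Finite.injective_iff_bijective.mp (moveFun'_inj n p q hq hpq))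

lemma moveEquiv'_val (n p q : ℕ) (hq : q < n) (hpq : p < q) (i : Fin n) :
    ((moveEquiv' n p q hq hpq) i).val =
      if i.val < p ∨ q < i.val then i.val else if i.val = p then q else i.val - 1 :=
  moveFun'_val n p q hq hpq i

lemma votes_total (V : Multiset (Ranking C)) {a b : C} (hab : a ≠ b) :
    votesBefore V a b + votesBefore V b a = Multiset.card V := by
  rw [votesBefore, votesBefore]
  have hiff : ∀ v ∈ V, Before v b a ↔ ¬ Before v a b := by
    intro v _
    constructor
    · exact fun h1 h2 => absurd (h1.trans h2) (lt_irrefl _)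
    · intro h1
      exact lt_of_le_of_ne (not_lt.mp h1) (fun he => hab (v.injective (Fin.val_injective (congrArg Fin.val he)).symm))
  rw [Multiset.filter_congr hiff, ← Multiset.card_add, Multiset.filter_add_not]

lemma multiset_card_filter_or {α : Type*} (V : Multiset α) (p q : α → Prop)
    [DecidablePred p] [DecidablePred q] :
    Multiset.card (V.filter (fun v => p v ∨ q v)) ≤
      Multiset.card (V.filter p) + Multiset.card (V.filter q) := by
  induction V using Multiset.induction with
  | empty => simp
  | cons a s ih =>
      by_cases hp : p a <;> by_cases hq : q a <;>
        simp [Multiset.filter_cons, hp, hq] <;> omega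

lemma votes_tri (V : Multiset (Ranking C)) {x y z : C} (hzx : z ≠ x) (hzy : z ≠ y) :
    votesBefore V x y ≤ votesBefore V x z + votesBefore V z y := by
  rw [votesBefore, votesBefore, votesBefore]
  calc Multiset.card (V.filter (fun v => Before v x y))
      ≤ Multiset.card (V.filter (fun v => Before v x z ∨ Before v z y)) := by
        apply Multiset.card_le_card
        apply Multiset.monotone_filter_right
        intro v hv
        by_contra hc
        push_neg at hc
        exact absurd hv (not_lt.mpr (le_trans (not_lt.mp hc.2) (not_lt.mp hc.1)))
    _ ≤ _ := multiset_card_filter_or V _ _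

end Helpers

/-- If `x ≥_α y` with `1 - 1/n < α ≤ 1` in an election with `n ≥ 2`
candidates, then `x` is ranked before `y` in every Kemeny (2-wise median) ranking. -/
theorem stmt1 {C : Type*} [Fintype C] [DecidableEq C]
    (hn : 2 ≤ Fintype.card C)
    (V : Multiset (Ranking C)) (hV : V ≠ 0)
    (x y : C) (hxy : x ≠ y) (α : ℝ)
    (hα1 : 1 - 1 / (Fintype.card C : ℝ) < α) (hα2 : α ≤ 1)
    (h : AtLeastRatio V α x y) :
    ∀ π : Ranking C, IsKMedian 2 V π → Before π x y := by
  intro π hmed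
  by_contra hbefore
  set n := Fintype.card C with hn_def
  have hyx : π y < π x :=
    lt_of_le_of_ne (not_lt.mp hbefore) (fun he => hxy ((π.injective he).symm))
  set p := (π y).val with hp
  set q := (π x).val with hq
  have hpq : p < q := hyx
  have hqn : q < n := (π x).isLt
  have hpn : p < n := (π y).isLt
  have hvalne : ∀ z : C, z ≠ x → (π z).val ≠ q := by
    intro z hz hv
    rw [hq] at hv
    exact hz (π.injective (Fin.val_injective hv))
  have hvalne' : ∀ z : C, z ≠ y → (π z).val ≠ p := by
    intro z hz hv
    rw [hp] at hv
    exact hz (π.injective (Fin.val_injective hv))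
  set π1 : Ranking C := π.trans (moveEquiv n p q hqn hpq) with hπ1def
  set π2 : Ranking C := π.trans (moveEquiv' n p q hqn hpq) with hπ2def
  have hπ1 : ∀ a : C, (π1 a).val =
      if (π a).val < p ∨ q < (π a).val then (π a).val
      else if (π a).val = q then p else (π a).val + 1 :=
    fun a => moveEquiv_val n p q hqn hpq (π a)
  have hπ2 : ∀ a : C, (π2 a).val =
      if (π a).val < p ∨ q < (π a).val then (π a).val
      else if (π a).val = p then q else (π a).val - 1 :=
    fun a => moveEquiv'_val n p q hqn hpq (π a)
  have hπ1x : (π1 x).val = p := by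
    rw [hπ1 x, ← hq]
    split_ifs <;> omega
  have hπ2y : (π2 y).val = q := by
    rw [hπ2 y, ← hp]
    split_ifs <;> omega
  -- the two modified rankings agree with π away from x (resp. y)
  have hagree1 : ∀ a b : C, a ≠ x → b ≠ x → (Before π1 a b ↔ Before π a b) := by
    intro a b ha hb
    have h1 := hvalne a ha
    have h2 := hvalne b hb
    have h3 := (π a).isLt
    have h4 := (π b).isLt
    show π1 a < π1 b ↔ π a < π b
    rw [Fin.lt_def, Fin.lt_def (a := π a), hπ1 a, hπ1 b]
    split_ifs <;> omega
  have hagree2 : ∀ a b : C, a ≠ y → b ≠ y → (Before π2 a b ↔ Before π a b) := by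
    intro a b ha hb
    have h1 := hvalne' a ha
    have h2 := hvalne' b hb
    have h3 := (π a).isLt
    have h4 := (π b).isLt
    show π2 a < π2 b ↔ π a < π b
    rw [Fin.lt_def, Fin.lt_def (a := π a), hπ2 a, hπ2 b]
    split_ifs <;> omega
  -- the set of candidates strictly between y and x in π
  set T : Finset C := univ.filter (fun z => p < (π z).val ∧ (π z).val < q) with hT
  have hzxT : ∀ z ∈ T, z ≠ x := by
    intro z hz he
    have hmem := (Finset.mem_filter.mp hz).2
    subst he
    rw [← hq] at hmem
    exact absurd hmem.2 (lt_irrefl _)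
  have hzyT : ∀ z ∈ T, z ≠ y := by
    intro z hz he
    have hmem := (Finset.mem_filter.mp hz).2
    subst he
    rw [← hp] at hmem
    exact absurd hmem.1 (lt_irrefl _)
  -- first inequality, from moving x up to position p
  have hterm1 : ∀ z ∈ (univ : Finset C).erase x,
      ((Fterm V π1 x z + Fterm V π1 z x) - (Fterm V π x z + Fterm V π z x))
      = if p ≤ (π z).val ∧ (π z).val < q
          then ((votesBefore V z x : ℤ) - votesBefore V x z) else 0 := by
    intro z hz
    have hzx : z ≠ x := (Finset.mem_erase.mp hz).1
    have hrq : (π z).val ≠ q := hvalne z hzx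
    have hlt := (π z).isLt
    have eA : Before π1 x z ↔ p ≤ (π z).val := by
      show π1 x < π1 z ↔ _
      rw [Fin.lt_def, hπ1x, hπ1 z]
      split_ifs <;> omega
    have eB : Before π1 z x ↔ (π z).val < p := by
      show π1 z < π1 x ↔ _
      rw [Fin.lt_def, hπ1x, hπ1 z]
      split_ifs <;> omega
    have eC : Before π x z ↔ q < (π z).val := by
      show π x < π z ↔ _
      rw [Fin.lt_def, ← hq]
    have eD : Before π z x ↔ (π z).val < q := by
      show π z < π x ↔ _
      rw [Fin.lt_def, ← hq]
    simp only [Fterm, eA, eB, eC, eD]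
    split_ifs <;> omega
  have hsum1 : (0:ℤ) ≤ ((votesBefore V y x : ℤ) - votesBefore V x y)
      + ∑ z ∈ T, ((votesBefore V z x : ℤ) - votesBefore V x z) := by
    have hmd := median_diff V π π1 hmed x hagree1
    rw [Finset.sum_congr rfl hterm1] at hmd
    rw [← Finset.sum_filter] at hmd
    have hS1 : ((univ : Finset C).erase x).filter
        (fun z => p ≤ (π z).val ∧ (π z).val < q) = insert y T := by
      ext z
      simp only [Finset.mem_filter, Finset.mem_erase, Finset.mem_univ, true_and,
        Finset.mem_insert, and_true, hT]
      constructor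
      · rintro ⟨hzx, h1, h2⟩
        rcases eq_or_ne z y with rfl | hzy
        · exact Or.inl rfl
        · exact Or.inr ⟨lt_of_le_of_ne h1 (Ne.symm (hvalne' z hzy)), h2⟩
      · rintro (rfl | ⟨h1, h2⟩)
        · exact ⟨Ne.symm hxy, le_of_eq hp, by rw [← hp]; exact hpq⟩
        · refine ⟨?_, le_of_lt h1, h2⟩
          intro he
          subst he
          rw [← hq] at h2
          exact absurd h2 (lt_irrefl _)
    have hyT : y ∉ T := by
      intro hy
      have := (Finset.mem_filter.mp hy).2.1
      rw [← hp] at this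
      exact absurd this (lt_irrefl _)
    rw [hS1, Finset.sum_insert hyT] at hmd
    exact hmd
  -- second inequality, from moving y down to position q
  have hterm2 : ∀ z ∈ (univ : Finset C).erase y,
      ((Fterm V π2 y z + Fterm V π2 z y) - (Fterm V π y z + Fterm V π z y))
      = if p < (π z).val ∧ (π z).val ≤ q
          then ((votesBefore V y z : ℤ) - votesBefore V z y) else 0 := by
    intro z hz
    have hzy : z ≠ y := (Finset.mem_erase.mp hz).1
    have hrp : (π z).val ≠ p := hvalne' z hzy
    have hlt := (π z).isLt
    have eA : Before π2 y z ↔ q < (π z).val := by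
      show π2 y < π2 z ↔ _
      rw [Fin.lt_def, hπ2y, hπ2 z]
      split_ifs <;> omega
    have eB : Before π2 z y ↔ (π z).val ≤ q := by
      show π2 z < π2 y ↔ _
      rw [Fin.lt_def, hπ2y, hπ2 z]
      split_ifs <;> omega
    have eC : Before π y z ↔ p < (π z).val := by
      show π y < π z ↔ _
      rw [Fin.lt_def, ← hp]
    have eD : Before π z y ↔ (π z).val < p := by
      show π z < π y ↔ _
      rw [Fin.lt_def, ← hp]
    simp only [Fterm, eA, eB, eC, eD]
    split_ifs <;> omega
  have hsum2 : (0:ℤ) ≤ ((votesBefore V y x : ℤ) - votesBefore V x y)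
      + ∑ z ∈ T, ((votesBefore V y z : ℤ) - votesBefore V z y) := by
    have hmd := median_diff V π π2 hmed y hagree2
    rw [Finset.sum_congr rfl hterm2] at hmd
    rw [← Finset.sum_filter] at hmd
    have hS2 : ((univ : Finset C).erase y).filter
        (fun z => p < (π z).val ∧ (π z).val ≤ q) = insert x T := by
      ext z
      simp only [Finset.mem_filter, Finset.mem_erase, Finset.mem_univ, true_and,
        Finset.mem_insert, and_true, hT]
      constructor
      · rintro ⟨hzy, h1, h2⟩
        rcases eq_or_ne z x with rfl | hzx
        · exact Or.inl rfl
        · exact Or.inr ⟨h1, lt_of_le_of_ne h2 (hvalne z hzx)⟩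
      · rintro (rfl | ⟨h1, h2⟩)
        · exact ⟨hxy, by rw [← hq]; exact hpq, le_of_eq hq.symm⟩
        · refine ⟨?_, h1, le_of_lt h2⟩
          intro he
          subst he
          rw [← hp] at h1
          exact absurd h1 (lt_irrefl _)
    have hxT : x ∉ T := by
      intro hx
      have := (Finset.mem_filter.mp hx).2.2
      rw [← hq] at this
      exact absurd this (lt_irrefl _)
    rw [hS2, Finset.sum_insert hxT] at hmd
    exact hmd
  -- per-candidate bound for z between y and x
  have hzbound : ∀ z ∈ T,
      ((votesBefore V z x : ℤ) - votesBefore V x z)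
        + ((votesBefore V y z : ℤ) - votesBefore V z y)
      ≤ 2 * (Multiset.card V : ℤ) - 2 * (votesBefore V x y : ℤ) := by
    intro z hz
    have hzx := hzxT z hz
    have hzy := hzyT z hz
    have h1 := votes_total V hzx
    have h2 := votes_total V (Ne.symm hzy : y ≠ z)
    have h3 := votes_tri V hzx hzy
    omega
  have hsumT : ∑ z ∈ T, (((votesBefore V z x : ℤ) - votesBefore V x z)
        + ((votesBefore V y z : ℤ) - votesBefore V z y))
      ≤ (T.card : ℤ) * (2 * (Multiset.card V : ℤ) - 2 * (votesBefore V x y : ℤ)) := by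
    have := Finset.sum_le_card_nsmul T _ _ hzbound
    simpa [nsmul_eq_mul] using this
  have hTcard : (T.card : ℤ) ≤ (n : ℤ) - 2 := by
    have hsub : T ⊆ ((univ : Finset C).erase x).erase y := by
      intro z hz
      exact Finset.mem_erase.mpr ⟨hzyT z hz,
        Finset.mem_erase.mpr ⟨hzxT z hz, Finset.mem_univ z⟩⟩
    have hc := Finset.card_le_card hsub
    rw [Finset.card_erase_of_mem (Finset.mem_erase.mpr ⟨Ne.symm hxy, Finset.mem_univ y⟩),
      Finset.card_erase_of_mem (Finset.mem_univ x), Finset.card_univ, ← hn_def] at hc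
    omega
  have hKv : votesBefore V x y ≤ Multiset.card V := by
    rw [votesBefore]
    exact Multiset.card_le_card (Multiset.filter_le _ _)
  have htot := votes_total V hxy
  have hsplit : ∑ z ∈ T, (((votesBefore V z x : ℤ) - votesBefore V x z)
        + ((votesBefore V y z : ℤ) - votesBefore V z y))
      = ∑ z ∈ T, ((votesBefore V z x : ℤ) - votesBefore V x z)
        + ∑ z ∈ T, ((votesBefore V y z : ℤ) - votesBefore V z y) :=
    Finset.sum_add_distrib
  -- conclude the integer inequality n·K ≤ (n−1)·v
  have hfin : (n : ℤ) * (votesBefore V x y : ℤ) ≤ ((n : ℤ) - 1) * (Multiset.card V : ℤ) := by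
    have h2vK : (0:ℤ) ≤ 2 * (Multiset.card V : ℤ) - 2 * (votesBefore V x y : ℤ) := by omega
    have h5 : (T.card : ℤ) * (2 * (Multiset.card V : ℤ) - 2 * (votesBefore V x y : ℤ))
        ≤ ((n : ℤ) - 2) * (2 * (Multiset.card V : ℤ) - 2 * (votesBefore V x y : ℤ)) :=
      mul_le_mul_of_nonneg_right hTcard h2vK
    have htot' : (votesBefore V x y : ℤ) + (votesBefore V y x : ℤ) = (Multiset.card V : ℤ) := by
      exact_mod_cast htot
    nlinarith [hsum1, hsum2, hsplit, hsumT, h5, htot']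
  -- final contradiction over ℝ
  have hα : α * (Multiset.card V : ℝ) ≤ (votesBefore V x y : ℝ) := h
  have hvpos : (0:ℝ) < (Multiset.card V : ℝ) := by
    have := Multiset.card_pos.mpr hV
    exact_mod_cast this
  have hnpos : (0:ℝ) < (n : ℝ) := by
    have : 0 < n := by omega
    exact_mod_cast this
  have hfinR : (n : ℝ) * (votesBefore V x y : ℝ) ≤ ((n : ℝ) - 1) * (Multiset.card V : ℝ) := by
    exact_mod_cast hfin
  have h6 : (n : ℝ) - 1 < (n : ℝ) * α := by
    have hmul := mul_lt_mul_of_pos_left hα1 hnpos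
    rw [mul_sub, mul_one, mul_one_div, div_self (ne_of_gt hnpos)] at hmul
    linarith
  have hA : (n : ℝ) * (α * (Multiset.card V : ℝ)) ≤ (n : ℝ) * (votesBefore V x y : ℝ) :=
    mul_le_mul_of_nonneg_left hα (le_of_lt hnpos)
  have hC : 0 < ((n : ℝ) * α - ((n : ℝ) - 1)) * (Multiset.card V : ℝ) :=
    mul_pos (by linarith) hvpos
  nlinarith [hA, hC, hfinR]
end

section
/- Let k ≥ 2 be an integer and let x be a candidate in an election such that x is ranked first in more than 50% of the votes. Then x is ranked first in every k-wise median of the election. -/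
open Finset

lemma cycleRange_self' {n : ℕ} [NeZero n] (p : Fin n) : p.cycleRange p = 0 := by
  cases n with
  | zero => exact p.elim0
  | succ m => exact Fin.cycleRange_self p

lemma cycleRange_lt_iff {n : ℕ} (p i j : Fin n) (hi : i ≠ p) (hj : j ≠ p) :
    p.cycleRange i < p.cycleRange j ↔ i < j := by
  cases n with
  | zero => exact i.elim0
  | succ m =>
    rcases lt_or_gt_of_ne hi with h1 | h1 <;>
    rcases lt_or_gt_of_ne hj with h2 | h2 <;>
    simp only [Fin.lt_iff_val_lt_val] at * <;>
    [(rw [Fin.coe_cycleRange_of_lt h1, Fin.coe_cycleRange_of_lt h2]);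
     (rw [Fin.coe_cycleRange_of_lt h1, Fin.cycleRange_of_gt h2]);
     (rw [Fin.cycleRange_of_gt h1, Fin.coe_cycleRange_of_lt h2]);
     (rw [Fin.cycleRange_of_gt h1, Fin.cycleRange_of_gt h2])] <;>
    omega

section Helpers

variable {C : Type*} [Fintype C] [DecidableEq C]

lemma topS_eq_iff (τ : Ranking C) (S : Finset C) (c : C) :
    topS τ S = (c : WithTop C) ↔ c ∈ S ∧ ∀ y ∈ S, τ c ≤ τ y := by
  constructor
  · intro h
    unfold topS at h
    cases hm : (S.image τ).min with
    | top =>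
      rw [hm] at h
      simp [WithTop.map_top] at h
    | coe a =>
      rw [hm] at h
      rw [WithTop.map_coe, WithTop.coe_inj] at h
      have hamem : a ∈ S.image τ := Finset.mem_of_min hm
      obtain ⟨c', hc', hc'a⟩ := Finset.mem_image.mp hamem
      have hac : a = τ c := (Equiv.symm_apply_eq τ).mp h
      have hcc : c' = c := by
        apply τ.injective; rw [hc'a, hac]
      refine ⟨hcc ▸ hc', fun y hy => ?_⟩
      have := Finset.min_le (Finset.mem_image_of_mem τ hy)
      rw [hm, hac] at this
      exact_mod_cast this
  · rintro ⟨hc, hmin⟩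
    have hmineq : (S.image τ).min = (τ c : WithTop (Fin (Fintype.card C))) := by
      apply le_antisymm
      · exact Finset.min_le (Finset.mem_image_of_mem τ hc)
      · apply Finset.le_min
        intro b hb
        obtain ⟨y, hy, rfl⟩ := Finset.mem_image.mp hb
        exact_mod_cast hmin y hy
    unfold topS
    rw [hmineq]
    simp

lemma topS_of_rankedFirst (σ : Ranking C) (x : C) (h : RankedFirst σ x)
    (S : Finset C) (hx : x ∈ S) : topS σ S = (x : WithTop C) := by
  rw [topS_eq_iff]
  refine ⟨hx, fun y _ => ?_⟩
  by_cases hyx : y = x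
  · subst hyx; exact le_rfl
  · exact le_of_lt (h y hyx)

lemma sum_ite_card {α : Type*} (V : Multiset α) (p : α → Prop) [DecidablePred p] :
    (V.map fun a => if p a then 1 else 0).sum = Multiset.card (V.filter p) := by
  induction V using Multiset.induction_on with
  | empty => simp
  | cons a s ih => by_cases h : p a <;> simp [h, ih, Multiset.filter_cons, Nat.add_comm]

lemma map_sum_sum {α ι : Type*} (V : Multiset α) (P : Finset ι) (f : ι → α → ℕ) :
    (V.map fun a => ∑ i ∈ P, f i a).sum = ∑ i ∈ P, (V.map (f i)).sum := by
  induction V using Multiset.induction_on with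
  | empty => simp
  | cons a s ih => simp [ih, Finset.sum_add_distrib]

lemma kDistV_eq_s5 (k : ℕ) (τ : Ranking C) (V : Multiset (Ranking C)) :
    kDistV k τ V = ∑ S ∈ (Finset.univ : Finset C).powerset.filter (fun S => S.card ≤ k),
      Multiset.card (V.filter (fun σ => topS τ S ≠ topS σ S)) := by
  have hk : ∀ σ : Ranking C, kDist k τ σ =
      ∑ S ∈ (Finset.univ : Finset C).powerset.filter (fun S => S.card ≤ k),
        (if topS τ S ≠ topS σ S then 1 else 0) := by
    intro σ
    rw [kDist, ← Finset.filter_filter, Finset.card_filter]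
  unfold kDistV
  simp only [hk]
  rw [map_sum_sum]
  congr 1
  ext S
  exact sum_ite_card V _

end Helpers

/-- a candidate ranked first in more than 50% of the votes is ranked
first in every `k`-wise median (`k ≥ 2`). -/
theorem stmt5 {C : Type*} [Fintype C] [DecidableEq C]
    (k : ℕ) (hk : 2 ≤ k)
    (V : Multiset (Ranking C)) (hV : V ≠ 0) (x : C)
    (hx : Multiset.card V < 2 * Multiset.card (V.filter (fun v => RankedFirst v x))) :
    ∀ π : Ranking C, IsKMedian k V π → RankedFirst π x := by
  haveI : Nonempty C := ⟨x⟩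
  haveI : NeZero (Fintype.card C) := ⟨Fintype.card_ne_zero⟩
  intro π hmed
  by_contra hnot
  -- y with π y < π x
  obtain ⟨y, hyx, hnb⟩ : ∃ y, y ≠ x ∧ ¬ Before π x y := by
    simpa [RankedFirst] using hnot
  have hxy : π y < π x := by
    rcases lt_trichotomy (π y) (π x) with h | h | h
    · exact h
    · exact absurd (π.injective h) hyx
    · exact absurd h hnb
  -- the improved ranking
  set p : Fin (Fintype.card C) := π x with hp
  set π' : Ranking C := π.trans (Fin.cycleRange p) with hπ'
  have hπ'x : ∀ z : C, z ≠ x → π' x < π' z := by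
    intro z hz
    have h0 : π' x = 0 := by
      simp [hπ', Equiv.trans_apply, ← hp, cycleRange_self']
    have hne : π' z ≠ 0 := by
      rw [← h0]
      intro h
      exact hz (π'.injective h)
    rw [h0]
    exact (Fin.pos_iff_ne_zero' _).mpr hne
  have horder : ∀ a b : C, a ≠ x → b ≠ x → (π' a < π' b ↔ π a < π b) := by
    intro a b ha hb
    have hap : π a ≠ p := fun h => ha (π.injective h)
    have hbp : π b ≠ p := fun h => hb (π.injective h)
    simpa [hπ', Equiv.trans_apply] using cycleRange_lt_iff p (π a) (π b) hap hbp
  -- top of S under π' when x ∈ S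
  have htop' : ∀ S : Finset C, x ∈ S → topS π' S = (x : WithTop C) := by
    intro S hxS
    rw [topS_eq_iff]
    refine ⟨hxS, fun z hz => ?_⟩
    by_cases hzx : z = x
    · subst hzx; exact le_rfl
    · exact le_of_lt (hπ'x z hzx)
  -- top of S under π' when x ∉ S
  have htopx : ∀ S : Finset C, x ∉ S → topS π' S = topS π S := by
    intro S hxS
    rcases S.eq_empty_or_nonempty with rfl | hS
    · unfold topS; simp
    · obtain ⟨a, ha⟩ := Finset.min_of_nonempty (hS.image π)
      have htπ : topS π S = ((π.symm a : C) : WithTop C) := by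
        unfold topS; rw [ha]; simp
      set t : C := π.symm a with htdef
      obtain ⟨htS, htmin⟩ := (topS_eq_iff π S t).mp htπ
      have htx : t ≠ x := fun h => hxS (h ▸ htS)
      rw [htπ, topS_eq_iff]
      refine ⟨htS, fun z hz => ?_⟩
      have hzx : z ≠ x := fun h => hxS (h ▸ hz)
      by_cases hzt : z = t
      · subst hzt; exact le_rfl
      · have : π t < π z :=
          lt_of_le_of_ne (htmin z hz) (fun h => hzt (π.injective h.symm))
        exact le_of_lt ((horder t z htx hzx).mpr this)
  -- counting comparison for each subset
  set P := (Finset.univ : Finset C).powerset.filter (fun S => S.card ≤ k) with hP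
  set F := Multiset.card (V.filter (fun v => RankedFirst v x)) with hF
  have key : ∀ S : Finset C, x ∈ S → topS π S ≠ (x : WithTop C) →
      Multiset.card (V.filter (fun σ => topS π' S ≠ topS σ S)) <
      Multiset.card (V.filter (fun σ => topS π S ≠ topS σ S)) := by
    intro S hxS hw
    have h1 : V.filter (fun σ => topS π' S ≠ topS σ S)
        = V.filter (fun σ => ¬ ((x : WithTop C) = topS σ S)) := by
      apply Multiset.filter_congr
      intro σ _
      rw [htop' S hxS]
    have h2 : V.filter (fun σ => topS π S ≠ topS σ S)
        = V.filter (fun σ => ¬ (topS π S = topS σ S)) :=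
      Multiset.filter_congr (fun σ _ => Iff.rfl)
    have hsplitx := congrArg Multiset.card
      (Multiset.filter_add_not (fun σ => (x : WithTop C) = topS σ S) V)
    have hsplitw := congrArg Multiset.card
      (Multiset.filter_add_not (fun σ => topS π S = topS σ S) V)
    rw [Multiset.card_add] at hsplitx hsplitw
    have hFA : F ≤ Multiset.card (V.filter (fun σ => (x : WithTop C) = topS σ S)) := by
      apply Multiset.card_le_card
      apply Multiset.monotone_filter_right
      intro σ hσ
      exact (topS_of_rankedFirst σ x hσ S hxS).symm
    have hBA : Multiset.card (V.filter (fun σ => topS π S = topS σ S)) ≤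
        Multiset.card (V.filter (fun σ => ¬ ((x : WithTop C) = topS σ S))) := by
      apply Multiset.card_le_card
      apply Multiset.monotone_filter_right
      intro σ hσ hcon
      exact hw (hσ.trans hcon.symm)
    rw [h1, h2]
    omega
  have hle : ∀ S : Finset C, x ∉ S ∨ topS π S = (x : WithTop C) →
      Multiset.card (V.filter (fun σ => topS π' S ≠ topS σ S)) =
      Multiset.card (V.filter (fun σ => topS π S ≠ topS σ S)) := by
    intro S h
    rcases h with h | h
    · rw [htopx S h]
    · have hxS : x ∈ S := ((topS_eq_iff π S x).mp h).1
      rw [htop' S hxS, h]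
  -- the distinguished pair set
  have hS0mem : ({x, y} : Finset C) ∈ P := by
    rw [hP, Finset.mem_filter]
    refine ⟨Finset.mem_powerset.mpr (Finset.subset_univ _), ?_⟩
    rw [Finset.card_pair (fun h => hyx h.symm)]
    exact hk
  have hS0top : topS π ({x, y} : Finset C) ≠ (x : WithTop C) := by
    intro h
    obtain ⟨-, hmin⟩ := (topS_eq_iff π _ x).mp h
    exact absurd (hmin y (by simp)) (not_le.mpr hxy)
  have hlt : kDistV k π' V < kDistV k π V := by
    rw [kDistV_eq_s5, kDistV_eq_s5, ← hP]
    apply Finset.sum_lt_sum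
    · intro S _
      by_cases hxS : x ∈ S
      · by_cases hw : topS π S = (x : WithTop C)
        · exact le_of_eq (hle S (Or.inr hw))
        · exact le_of_lt (key S hxS hw)
      · exact le_of_eq (hle S (Or.inl hxS))
    · exact ⟨{x, y}, hS0mem, key _ (Finset.mem_insert_self x _) hS0top⟩
  exact absurd (hmed π') (not_le.mpr hlt)
end

section
/- There exists an election (one with 4 candidates and 11 votes) and a candidate z such that z is a Condorcet loser — i.e., every other candidate is ranked before z in more than half of the votes — yet z is ranked first in the unique 3-wise median of the election. Hence the 3-wise Kemeny voting scheme does not satisfy the Condorcet loser criterion. -/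
open Finset

instance {C : Type*} [Fintype C] [DecidableEq C] (k : ℕ) (V : Multiset (Ranking C))
    (π : Ranking C) : Decidable (IsKMedian k V π) :=
  inferInstanceAs (Decidable (∀ σ : Ranking C, kDistV k π V ≤ kDistV k σ V))

def r0 : Ranking (Fin 4) := ⟨![0,1,2,3], ![0,1,2,3], by intro x; revert x; decide, by intro x; revert x; decide⟩
def r1 : Ranking (Fin 4) := ⟨![0,2,1,3], ![0,2,1,3], by intro x; revert x; decide, by intro x; revert x; decide⟩
def r2 : Ranking (Fin 4) := ⟨![1,0,2,3], ![1,0,2,3], by intro x; revert x; decide, by intro x; revert x; decide⟩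
def r3 : Ranking (Fin 4) := ⟨![2,0,1,3], ![1,2,0,3], by intro x; revert x; decide, by intro x; revert x; decide⟩
def r4 : Ranking (Fin 4) := ⟨![2,1,0,3], ![2,1,0,3], by intro x; revert x; decide, by intro x; revert x; decide⟩
def r5 : Ranking (Fin 4) := ⟨![1,3,2,0], ![3,0,2,1], by intro x; revert x; decide, by intro x; revert x; decide⟩
def r6 : Ranking (Fin 4) := ⟨![3,2,1,0], ![3,2,1,0], by intro x; revert x; decide, by intro x; revert x; decide⟩
def Vex : Multiset (Ranking (Fin 4)) := {r1, r5, r6, r6, r5, r5, r0, r1, r2, r4, r3}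

/-- there is an election with 4 candidates and 11 votes with a Condorcet
loser `z` that is nevertheless ranked first in the unique 3-wise median; hence the
3-wise Kemeny scheme fails the Condorcet loser criterion. -/
theorem stmt7 :
    ∃ (V : Multiset (Ranking (Fin 4))) (z : Fin 4),
      Multiset.card V = 11 ∧
      (∀ y : Fin 4, y ≠ z → Multiset.card V < 2 * votesBefore V y z) ∧
      ∃ π : Ranking (Fin 4), IsKMedian 3 V π ∧
        (∀ σ : Ranking (Fin 4), IsKMedian 3 V σ → σ = π) ∧
        RankedFirst π z := by
  refine ⟨Vex, 3, by decide, by decide, r5, by decide, by decide, by decide⟩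
end
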